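/- Let m ≥ 3 and suppose Assumption (S) holds: there exist real numbers p_k, q_k (2 ≤ k ≤ m) with p₂ > 0, δ ∈ (0,1) and C > 0 such that |γ_j(S_n) − (n p_j + q_j)| ≤ C δⁿ for all n and all 2 ≤ j ≤ m, where σ_n² = γ₂(S_n) → ∞. Then there exist polynomials 𝐇₁, …, 𝐇_{m−2}, independent of n, whose coefficients are polynomial functions of the numbers α_j = q_{j+2} − q₂ p_{j+2}/p₂ and β_j = p_{j+2}/p₂ (1 ≤ j ≤ m−2), an integer d_m and a constant K_m, such that for every n there is a polynomial R_n of degree at most d_m with all coefficients bounded in absolute value by K_m satisfying, for all real x: Φ_{m,n}(x) = Φ(x) − φ(x) Σ_{j=1}^{m−2} σ_n^{−j} 𝐇_j(x) + e^{−x²/2} R_n(x) σ_n^{−(m−1)}. -/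

import Mathlib

open MeasureTheory ProbabilityTheory Filter Set

/-- The standard normal density `φ`. -/
noncomputable def stdphi (x : ℝ) : ℝ :=
  (Real.sqrt (2 * Real.pi))⁻¹ * Real.exp (-x ^ 2 / 2)

/-- The standard normal distribution function `Φ`. -/
noncomputable def stdPhi (x : ℝ) : ℝ :=
  ∫ t in Set.Iic x, stdphi t

/-- Evaluation of the `k`-th probabilist's Hermite polynomial. -/
noncomputable def hermiteEval (k : ℕ) (x : ℝ) : ℝ :=
  Polynomial.aeval x (Polynomial.hermite k)

/-- The Edgeworth correction term of order `p` built from cumulants `γ 3, …, γ p`: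
the sum over all tuples `k̄ = (k₁,…,k_{p−2})` of nonnegative integers, not all zero, with
`Σ_j j k_j ≤ p − 2`, of `(k₁!⋯k_{p−2}!)⁻¹ (γ₃/3!)^{k₁} ⋯ (γ_p/p!)^{k_{p−2}} H_{k−1}(x)`
where `k = 3k₁ + 4k₂ + ⋯ + p·k_{p−2}`. -/
noncomputable def edgeworthCorrection (p : ℕ) (γ : ℕ → ℝ) (x : ℝ) : ℝ :=
  ∑ kb ∈ (Fintype.piFinset fun _ : Fin (p - 2) => Finset.range p).filter
      (fun kb => kb ≠ 0 ∧ (∑ j : Fin (p - 2), (j.1 + 1) * kb j) ≤ p - 2),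
    (∏ j : Fin (p - 2), ((Nat.factorial (kb j) : ℝ))⁻¹) *
      (∏ j : Fin (p - 2), (γ (j.1 + 3) / (Nat.factorial (j.1 + 3) : ℝ)) ^ kb j) *
      hermiteEval ((∑ j : Fin (p - 2), (j.1 + 3) * kb j) - 1) x

/-- The Edgeworth approximant of order `p` built from cumulants `γ`. -/
noncomputable def edgeworthFn (p : ℕ) (γ : ℕ → ℝ) (x : ℝ) : ℝ :=
  stdPhi x - stdphi x * edgeworthCorrection p γ x

section Helpers
open Polynomial Finset


/-- ℓ¹ "norm" of the coefficients. -/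
noncomputable def pNN (f : Polynomial ℝ) : ℝ := ∑ i ∈ f.support, |f.coeff i|

lemma pNN_nonneg (f : Polynomial ℝ) : 0 ≤ pNN f :=
  Finset.sum_nonneg fun _ _ => abs_nonneg _

lemma abs_coeff_le_pNN (f : Polynomial ℝ) (i : ℕ) : |f.coeff i| ≤ pNN f := by
  by_cases h : i ∈ f.support
  · exact Finset.single_le_sum (f := fun i => |f.coeff i|) (fun _ _ => abs_nonneg _) h
  · simp only [Polynomial.notMem_support_iff] at h
    simp [h, pNN_nonneg]

/-- Coefficients bounded by values on the grid `0,…,d`. -/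
lemma coeff_bound_of_eval (d : ℕ) :
    ∃ L : ℝ, 0 ≤ L ∧ ∀ f : Polynomial ℝ, f.natDegree ≤ d →
      ∀ M : ℝ, (∀ t ∈ Finset.range (d+1), |f.eval (t : ℝ)| ≤ M) →
      ∀ i, |f.coeff i| ≤ L * M := by
  set s : Finset ℕ := Finset.range (d+1) with hs
  set v : ℕ → ℝ := fun t => (t : ℝ)
  have hvs : Set.InjOn v s := fun a _ b _ h => Nat.cast_injective h
  refine ⟨∑ t ∈ s, pNN (Lagrange.basis s v t), Finset.sum_nonneg fun _ _ => pNN_nonneg _,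
    fun f hdeg M hM i => ?_⟩
  have hM0 : 0 ≤ M := le_trans (abs_nonneg _) (hM 0 (by simp [hs]))
  have hdlt : f.degree < (#s : ℕ) := by
    calc f.degree ≤ (f.natDegree : WithBot ℕ) := Polynomial.degree_le_natDegree
    _ < (#s : ℕ) := by
        rw [hs, Finset.card_range]
        exact_mod_cast Nat.lt_succ_of_le hdeg
  have hf : f = Lagrange.interpolate s v fun t => f.eval (v t) :=
    Lagrange.eq_interpolate hvs hdlt
  have : f.coeff i = ∑ t ∈ s, f.eval (v t) * (Lagrange.basis s v t).coeff i := by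
    conv_lhs => rw [hf, Lagrange.interpolate_apply]
    rw [Polynomial.finset_sum_coeff]
    exact Finset.sum_congr rfl fun t _ => by rw [Polynomial.coeff_C_mul]
  rw [this]
  calc |∑ t ∈ s, f.eval (v t) * (Lagrange.basis s v t).coeff i|
      ≤ ∑ t ∈ s, |f.eval (v t)| * |(Lagrange.basis s v t).coeff i| := by
        refine (Finset.abs_sum_le_sum_abs _ _).trans ?_
        exact le_of_eq (Finset.sum_congr rfl fun t _ => abs_mul _ _)
    _ ≤ ∑ t ∈ s, M * pNN (Lagrange.basis s v t) := by
        refine Finset.sum_le_sum fun t ht => ?_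
        exact mul_le_mul (hM t ht) (abs_coeff_le_pNN _ _) (abs_nonneg _) hM0
    _ = (∑ t ∈ s, pNN (Lagrange.basis s v t)) * M := by
        rw [Finset.sum_mul]; exact Finset.sum_congr rfl fun t _ => mul_comm _ _

/-- Bound for a product. -/
lemma abs_prod_le {ι : Type*} (s : Finset ι) (f : ι → ℝ) (M : ℝ)
    (hf : ∀ i ∈ s, |f i| ≤ M) : |∏ i ∈ s, f i| ≤ M ^ s.card := by
  classical
  induction s using Finset.induction_on with
  | empty => simp
  | insert _ _ hx ih =>
    rename_i a t
    rw [Finset.prod_insert hx, Finset.card_insert_of_notMem hx, abs_mul, pow_succ]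
    have h1 : |f a| ≤ M := hf a (Finset.mem_insert_self _ _)
    have h2 : |∏ i ∈ t, f i| ≤ M ^ t.card := ih fun i hi => hf i (Finset.mem_insert_of_mem hi)
    have hM0 : 0 ≤ M := le_trans (abs_nonneg _) h1
    calc |f a| * |∏ i ∈ t, f i| ≤ M * M ^ t.card :=
          mul_le_mul h1 h2 (abs_nonneg _) hM0
      _ = M ^ t.card * M := mul_comm _ _

/-- Difference of products bound. -/
lemma abs_prod_sub_prod_le {ι : Type*} (s : Finset ι) (f g : ι → ℝ) (M : ℝ) (ε : ι → ℝ)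
    (hM : 1 ≤ M) (hf : ∀ i ∈ s, |f i| ≤ M) (hg : ∀ i ∈ s, |g i| ≤ M)
    (hε : ∀ i ∈ s, |f i - g i| ≤ ε i) :
    |∏ i ∈ s, f i - ∏ i ∈ s, g i| ≤ M ^ s.card * ∑ i ∈ s, ε i := by
  classical
  induction s using Finset.induction_on with
  | empty => simp
  | insert _ _ hx ih =>
    rename_i a t
    have hM0 : (0:ℝ) ≤ M := le_trans zero_le_one hM
    have hf' : ∀ i ∈ t, |f i| ≤ M := fun i hi => hf i (Finset.mem_insert_of_mem hi)
    have hg' : ∀ i ∈ t, |g i| ≤ M := fun i hi => hg i (Finset.mem_insert_of_mem hi)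
    have hε' : ∀ i ∈ t, |f i - g i| ≤ ε i := fun i hi => hε i (Finset.mem_insert_of_mem hi)
    have ihs := ih hf' hg' hε'
    have hεnn : ∀ i ∈ t, 0 ≤ ε i := fun i hi => le_trans (abs_nonneg _) (hε' i hi)
    have hεa : 0 ≤ ε a := le_trans (abs_nonneg _) (hε a (Finset.mem_insert_self _ _))
    rw [Finset.prod_insert hx, Finset.prod_insert hx, Finset.card_insert_of_notMem hx,
      Finset.sum_insert hx]
    have key : f a * ∏ i ∈ t, f i - g a * ∏ i ∈ t, g i
        = f a * (∏ i ∈ t, f i - ∏ i ∈ t, g i) + (f a - g a) * ∏ i ∈ t, g i := by ring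
    rw [key]
    have hMpow : (0:ℝ) ≤ M ^ t.card := pow_nonneg hM0 _
    have hMpow1 : M ^ t.card ≤ M ^ (t.card + 1) := pow_le_pow_right₀ hM (Nat.le_succ _)
    calc |f a * (∏ i ∈ t, f i - ∏ i ∈ t, g i) + (f a - g a) * ∏ i ∈ t, g i|
        ≤ |f a| * |∏ i ∈ t, f i - ∏ i ∈ t, g i| + |f a - g a| * |∏ i ∈ t, g i| := by
          refine (abs_add_le _ _).trans ?_
          rw [abs_mul, abs_mul]
      _ ≤ M * (M ^ t.card * ∑ i ∈ t, ε i) + ε a * M ^ t.card := by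
          refine add_le_add ?_ ?_
          · exact mul_le_mul (hf a (Finset.mem_insert_self _ _)) ihs (abs_nonneg _) hM0
          · exact mul_le_mul (hε a (Finset.mem_insert_self _ _)) (abs_prod_le t g M hg')
              (abs_nonneg _) hεa
      _ ≤ M ^ (t.card + 1) * (ε a + ∑ i ∈ t, ε i) := by
          have h2 : ε a * M ^ t.card ≤ M ^ (t.card + 1) * ε a := by
            rw [mul_comm (M ^ (t.card+1))]
            exact mul_le_mul_of_nonneg_left hMpow1 hεa
          have h1 : M * (M ^ t.card * ∑ i ∈ t, ε i) = M ^ (t.card+1) * ∑ i ∈ t, ε i := by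
            rw [pow_succ]; ring
          rw [mul_add]; linarith

/-- Difference of powers. -/
lemma abs_pow_sub_pow_le' (a b M ε : ℝ) (k : ℕ) (hM : 1 ≤ M)
    (ha : |a| ≤ M) (hb : |b| ≤ M) (hε : |a - b| ≤ ε) :
    |a ^ k - b ^ k| ≤ M ^ k * ((k:ℝ) * ε) := by
  have := abs_prod_sub_prod_le (Finset.range k) (fun _ => a) (fun _ => b) M (fun _ => ε)
    hM (fun _ _ => ha) (fun _ _ => hb) (fun _ _ => hε)
  simpa [Finset.prod_const, Finset.card_range] using this

/-- Uniform bound on coefficients of finitely many polynomials. -/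
lemma exists_bound_coeff_lt (f : ℕ → Polynomial ℝ) (N : ℕ) :
    ∃ K : ℝ, 0 ≤ K ∧ ∀ n < N, ∀ i, |(f n).coeff i| ≤ K := by
  induction N with
  | zero => exact ⟨0, le_refl _, fun n hn => absurd hn (Nat.not_lt_zero n)⟩
  | succ N ih =>
    obtain ⟨K, hK0, hK⟩ := ih
    refine ⟨max K (pNN (f N)), le_trans hK0 (le_max_left _ _), fun n hn i => ?_⟩
    rcases Nat.lt_succ_iff_lt_or_eq.mp hn with h | rfl
    · exact (hK n h i).trans (le_max_left _ _)
    · exact (abs_coeff_le_pNN _ _).trans (le_max_right _ _)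



/-- index set -/
noncomputable def Fm (m : ℕ) : Finset (Fin (m - 2) → ℕ) :=
  (Fintype.piFinset fun _ : Fin (m - 2) => Finset.range m).filter
      (fun kb => kb ≠ 0 ∧ (∑ j : Fin (m - 2), (j.1 + 1) * kb j) ≤ m - 2)

/-- polynomial in `u = σ⁻¹` -/
noncomputable def fPm (m : ℕ) (β b : ℕ → ℝ) (kb : Fin (m - 2) → ℕ) : Polynomial ℝ :=
  ∏ j : Fin (m - 2),
    (C (β (j.1 + 1) / (Nat.factorial (j.1 + 3) : ℝ)) * X ^ (j.1 + 1) +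
     C (b (j.1 + 1) / (Nat.factorial (j.1 + 3) : ℝ)) * X ^ (j.1 + 3)) ^ kb j

/-- scaled Hermite polynomial -/
noncomputable def cHm (m : ℕ) (kb : Fin (m - 2) → ℕ) : Polynomial ℝ :=
  C (∏ j : Fin (m - 2), ((Nat.factorial (kb j) : ℝ))⁻¹) *
    (Polynomial.hermite ((∑ j : Fin (m - 2), (j.1 + 3) * kb j) - 1)).map (Int.castRingHom ℝ)

/-- coefficient of `u^w` in the expansion of the correction, as a polynomial in `x` -/
noncomputable def Dcom (m : ℕ) (β b : ℕ → ℝ) (w : ℕ) : Polynomial ℝ :=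
  ∑ kb ∈ Fm m, (fPm m β b kb).coeff w • cHm m kb

lemma sum_kb_le {m : ℕ} {kb : Fin (m-2) → ℕ} (hkb : kb ∈ Fm m) :
    (∑ j : Fin (m-2), (j.1 + 3) * kb j) ≤ 3 * (m - 2) := by
  rw [Fm, Finset.mem_filter] at hkb
  obtain ⟨-, -, h2⟩ := hkb
  have h3 : (∑ j : Fin (m-2), kb j) ≤ m - 2 := by
    refine le_trans (Finset.sum_le_sum fun j _ => ?_) h2
    exact Nat.le_mul_of_pos_left _ (Nat.succ_pos _)
  calc (∑ j : Fin (m-2), (j.1 + 3) * kb j)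
      = (∑ j : Fin (m-2), ((j.1+1) * kb j + 2 * kb j)) := by
        refine Finset.sum_congr rfl fun j _ => by ring
    _ = (∑ j : Fin (m-2), (j.1+1) * kb j) + 2 * ∑ j : Fin (m-2), kb j := by
        rw [Finset.sum_add_distrib, Finset.mul_sum]
    _ ≤ (m-2) + 2 * (m-2) := by omega
    _ = 3 * (m-2) := by ring

lemma natDegree_cHm_le {m : ℕ} {kb : Fin (m-2) → ℕ} (hkb : kb ∈ Fm m) :
    (cHm m kb).natDegree ≤ 3 * m := by
  rw [cHm]
  refine le_trans (Polynomial.natDegree_mul_le) ?_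
  rw [Polynomial.natDegree_C, zero_add]
  refine le_trans (Polynomial.natDegree_map_le) ?_
  rw [Polynomial.natDegree_hermite]
  have := sum_kb_le hkb
  omega

lemma natDegree_fPm_le {m : ℕ} (β b : ℕ → ℝ) {kb : Fin (m-2) → ℕ} (hkb : kb ∈ Fm m) :
    (fPm m β b kb).natDegree ≤ 3 * (m - 2) := by
  rw [fPm]
  refine le_trans (Polynomial.natDegree_prod_le _ _) ?_
  refine le_trans (Finset.sum_le_sum (fun j (_ : j ∈ Finset.univ) => ?_)) (sum_kb_le hkb)
  have hbase : (C (β (j.1 + 1) / (Nat.factorial (j.1 + 3) : ℝ)) * X ^ (j.1 + 1) +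
      C (b (j.1 + 1) / (Nat.factorial (j.1 + 3) : ℝ)) * X ^ (j.1 + 3)).natDegree ≤ j.1 + 3 := by
    refine le_trans (Polynomial.natDegree_add_le _ _) ?_
    simp only [max_le_iff]
    constructor
    · refine le_trans (Polynomial.natDegree_mul_le) ?_
      simp [Polynomial.natDegree_X_pow]
    · refine le_trans (Polynomial.natDegree_mul_le) ?_
      simp [Polynomial.natDegree_X_pow]
  calc _ ≤ kb j * (j.1 + 3) := Polynomial.natDegree_pow_le_of_le (kb j) hbase
    _ = (j.1 + 3) * kb j := mul_comm _ _

lemma natDegree_Dcom_le {m : ℕ} (β b : ℕ → ℝ) (w : ℕ) :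
    (Dcom m β b w).natDegree ≤ 3 * m := by
  rw [Dcom]
  refine le_trans (Polynomial.natDegree_sum_le_of_forall_le _ _ fun kb hkb => ?_) (le_refl _)
  refine le_trans (Polynomial.natDegree_smul_le _ _) (natDegree_cHm_le hkb)

lemma fPm_eval_zero {m : ℕ} (β b : ℕ → ℝ) {kb : Fin (m-2) → ℕ} (hkb : kb ∈ Fm m) :
    (fPm m β b kb).eval 0 = 0 := by
  rw [Fm, Finset.mem_filter] at hkb
  obtain ⟨-, h1, -⟩ := hkb
  obtain ⟨j, hj⟩ := Function.ne_iff.mp h1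
  rw [fPm, Polynomial.eval_prod]
  refine Finset.prod_eq_zero (Finset.mem_univ j) ?_
  simp only [Polynomial.eval_pow, Polynomial.eval_add, Polynomial.eval_mul, Polynomial.eval_C,
    Polynomial.eval_pow, Polynomial.eval_X]
  rw [zero_pow (by omega), zero_pow (by omega)]
  simp only [mul_zero, add_zero]
  exact zero_pow (by simpa using hj)

lemma Dcom_zero {m : ℕ} (β b : ℕ → ℝ) : Dcom m β b 0 = 0 := by
  rw [Dcom]
  refine Finset.sum_eq_zero fun kb hkb => ?_
  rw [Polynomial.coeff_zero_eq_eval_zero, fPm_eval_zero β b hkb, zero_smul]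

/-- Key expansion: the generating identity in `u`. -/
lemma Dcom_eval_sum {m : ℕ} (β b : ℕ → ℝ) (u x : ℝ) :
    ∑ w ∈ Finset.range (3*(m-2)+1), (Dcom m β b w).eval x * u ^ w
      = ∑ kb ∈ Fm m, (fPm m β b kb).eval u * (cHm m kb).eval x := by
  have : ∀ w, (Dcom m β b w).eval x
      = ∑ kb ∈ Fm m, (fPm m β b kb).coeff w * (cHm m kb).eval x := by
    intro w
    rw [Dcom, Polynomial.eval_finset_sum]
    exact Finset.sum_congr rfl fun kb _ => by rw [Polynomial.eval_smul, smul_eq_mul]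
  simp_rw [this, Finset.sum_mul]
  rw [Finset.sum_comm]
  refine Finset.sum_congr rfl fun kb hkb => ?_
  have hdeg : (fPm m β b kb).natDegree < 3*(m-2)+1 :=
    Nat.lt_succ_of_le (natDegree_fPm_le β b hkb)
  rw [Polynomial.eval_eq_sum_range' hdeg, Finset.sum_mul]
  exact Finset.sum_congr rfl fun w _ => by ring

/-- Polynomials all of whose coefficients lie in `S`. -/
noncomputable def coeffSubring (S : Subring ℝ) : Subring (Polynomial ℝ) where
  carrier := {f | ∀ i, f.coeff i ∈ S}
  zero_mem' := by intro i; simp only [Polynomial.coeff_zero]; exact S.zero_mem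
  one_mem' := by
    intro i
    rw [Polynomial.coeff_one]
    split <;> simp [S.one_mem, S.zero_mem]
  add_mem' := by
    intro a b ha hb i
    rw [Polynomial.coeff_add]; exact S.add_mem (ha i) (hb i)
  neg_mem' := by
    intro a ha i
    rw [Polynomial.coeff_neg]; exact S.neg_mem (ha i)
  mul_mem' := by
    intro a b ha hb i
    rw [Polynomial.coeff_mul]
    exact Subring.sum_mem _ fun c _ => S.mul_mem (ha _) (hb _)

lemma rat_inv_nat_mem (S : Subring ℝ) (hrat : ∀ k : ℚ, ((k : ℝ)) ∈ S) (a : ℕ) :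
    ((a : ℝ))⁻¹ ∈ S := by
  have : ((a : ℝ))⁻¹ = (((a : ℚ)⁻¹ : ℚ) : ℝ) := by push_cast; ring
  rw [this]; exact hrat _

lemma cHm_mem (S : Subring ℝ) (hrat : ∀ k : ℚ, ((k : ℝ)) ∈ S) (m : ℕ) (kb : Fin (m-2) → ℕ) :
    ∀ i, (cHm m kb).coeff i ∈ S := by
  intro i
  rw [cHm, Polynomial.coeff_C_mul, Polynomial.coeff_map]
  refine S.mul_mem (Subring.prod_mem S fun j _ => rat_inv_nat_mem S hrat _) ?_
  have : ∀ z : ℤ, ((z : ℝ)) ∈ S := by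
    intro z
    have hz : ((z : ℝ)) = (((z : ℚ)) : ℝ) := by push_cast; ring
    rw [hz]; exact hrat _
  exact this _

lemma fPm_mem (S : Subring ℝ) (hrat : ∀ k : ℚ, ((k : ℝ)) ∈ S) (m : ℕ) (β b : ℕ → ℝ)
    (hβ : ∀ l, 1 ≤ l → l ≤ m - 2 → β l ∈ S) (hb : ∀ l, 1 ≤ l → l ≤ m - 2 → b l ∈ S)
    (kb : Fin (m-2) → ℕ) : fPm m β b kb ∈ coeffSubring S := by
  rw [fPm]
  refine Subring.prod_mem _ fun j _ => Subring.pow_mem _ ?_ _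
  have hCX : ∀ a : ℝ, a ∈ S → ∀ k : ℕ, (C a * X ^ k : Polynomial ℝ) ∈ coeffSubring S := by
    intro a haS k i
    rw [Polynomial.coeff_C_mul, Polynomial.coeff_X_pow]
    split <;> simp only [mul_one, mul_zero]
    · exact haS
    · exact S.zero_mem
  have hj1 : (1:ℕ) ≤ j.1 + 1 := le_refl 1 |>.trans (Nat.le_add_left _ _)
  have hj2 : j.1 + 1 ≤ m - 2 := j.2
  refine Subring.add_mem _ (hCX _ ?_ _) (hCX _ ?_ _)
  · rw [div_eq_mul_inv]
    exact S.mul_mem (hβ _ hj1 hj2) (rat_inv_nat_mem S hrat _)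
  · rw [div_eq_mul_inv]
    exact S.mul_mem (hb _ hj1 hj2) (rat_inv_nat_mem S hrat _)

lemma Dcom_coeff_mem (S : Subring ℝ) (hrat : ∀ k : ℚ, ((k : ℝ)) ∈ S) (m : ℕ) (β b : ℕ → ℝ)
    (hβ : ∀ l, 1 ≤ l → l ≤ m - 2 → β l ∈ S) (hb : ∀ l, 1 ≤ l → l ≤ m - 2 → b l ∈ S)
    (w i : ℕ) : (Dcom m β b w).coeff i ∈ S := by
  rw [Dcom, Polynomial.finset_sum_coeff]
  refine Subring.sum_mem _ fun kb _ => ?_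
  rw [Polynomial.coeff_smul, smul_eq_mul]
  exact S.mul_mem (fPm_mem S hrat m β b hβ hb kb w) (cHm_mem S hrat m kb i)

/-- Identification of the Edgeworth correction with the `u`-expansion. -/
lemma corr_eq (m : ℕ) (γf : ℕ → ℝ) (σv : ℝ) (hσ : σv ≠ 0) (β : ℕ → ℝ) (x : ℝ) :
    edgeworthCorrection m (fun j => γf j / σv ^ j) x
      = ∑ kb ∈ Fm m,
          (fPm m β (fun l => γf (l + 2) - σv ^ 2 * β l) kb).eval σv⁻¹ * (cHm m kb).eval x := by
  rw [edgeworthCorrection]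
  refine Finset.sum_congr rfl fun kb hkb => ?_
  rw [fPm, cHm, Polynomial.eval_prod, Polynomial.eval_mul, Polynomial.eval_C,
    Polynomial.eval_map]
  have hherm : Polynomial.eval₂ (Int.castRingHom ℝ) x
      (Polynomial.hermite ((∑ j : Fin (m - 2), (j.1 + 3) * kb j) - 1))
      = hermiteEval ((∑ j : Fin (m - 2), (j.1 + 3) * kb j) - 1) x := by
    rw [hermiteEval, Polynomial.aeval_def]
    norm_cast
  rw [hherm]
  have hfac : ∀ j : Fin (m - 2),
      Polynomial.eval σv⁻¹ ((C (β (j.1 + 1) / (Nat.factorial (j.1 + 3) : ℝ)) * X ^ (j.1 + 1) +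
        C ((γf (j.1 + 1 + 2) - σv ^ 2 * β (j.1 + 1)) / (Nat.factorial (j.1 + 3) : ℝ)) *
          X ^ (j.1 + 3)))
      = (γf (j.1 + 3) / σv ^ (j.1 + 3)) / (Nat.factorial (j.1 + 3) : ℝ) := by
    intro j
    have hfact : ((Nat.factorial (j.1 + 3) : ℝ)) ≠ 0 := by
      exact_mod_cast Nat.factorial_ne_zero _
    simp only [Polynomial.eval_add, Polynomial.eval_mul, Polynomial.eval_C, Polynomial.eval_pow,
      Polynomial.eval_X]
    have h12 : j.1 + 1 + 2 = j.1 + 3 := by omega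
    rw [h12]
    rw [inv_pow, inv_pow]
    field_simp
    ring
  have hprod : (∏ j : Fin (m - 2),
      Polynomial.eval σv⁻¹ ((C (β (j.1 + 1) / (Nat.factorial (j.1 + 3) : ℝ)) * X ^ (j.1 + 1) +
        C ((γf (j.1 + 1 + 2) - σv ^ 2 * β (j.1 + 1)) / (Nat.factorial (j.1 + 3) : ℝ)) *
          X ^ (j.1 + 3)) ^ kb j))
      = ∏ j : Fin (m - 2),
          ((γf (j.1 + 3) / σv ^ (j.1 + 3)) / (Nat.factorial (j.1 + 3) : ℝ)) ^ kb j :=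
    Finset.prod_congr rfl fun j _ => by rw [Polynomial.eval_pow, hfac j]
  rw [hprod]
  ring

lemma kb_le {m : ℕ} {kb : Fin (m-2) → ℕ} (hkb : kb ∈ Fm m) (j : Fin (m-2)) : kb j ≤ m := by
  rw [Fm, Finset.mem_filter, Fintype.mem_piFinset] at hkb
  have := hkb.1 j
  rw [Finset.mem_range] at this
  omega

/-- The Lipschitz constant for `fPm` evaluations. -/
noncomputable def CSTc (m : ℕ) (M0 : ℝ) : ℝ :=
  ((m - 2 : ℕ) : ℝ) * (m : ℝ) * (2 * M0 ^ (3*m+1)) ^ (m*(m-1)) * M0 ^ (3*m)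

lemma fPm_eval_diff_le (m : ℕ) (hm : 3 ≤ m) (β b b' : ℕ → ℝ) {kb : Fin (m-2) → ℕ}
    (hkb : kb ∈ Fm m)
    (M0 ε : ℝ) (hM0 : 1 ≤ M0) (hε : 0 ≤ ε)
    (hβ : ∀ l, 1 ≤ l → l ≤ m - 2 → |β l| ≤ M0)
    (hb : ∀ l, 1 ≤ l → l ≤ m - 2 → |b l| ≤ M0)
    (hb' : ∀ l, 1 ≤ l → l ≤ m - 2 → |b' l| ≤ M0)
    (hd : ∀ l, 1 ≤ l → l ≤ m - 2 → |b l - b' l| ≤ ε)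
    (s : ℝ) (hs : |s| ≤ M0) :
    |(fPm m β b kb).eval s - (fPm m β b' kb).eval s| ≤ CSTc m M0 * ε := by
  have hM00 : (0:ℝ) ≤ M0 := le_trans zero_le_one hM0
  set Mfac : ℝ := 2 * M0 ^ (3*m+1) with hMfac
  have hMfac1 : 1 ≤ Mfac := by
    have : (1:ℝ) ≤ M0 ^ (3*m+1) := one_le_pow₀ hM0
    nlinarith
  have hspow : ∀ t : ℕ, t ≤ 3*m → |s| ^ t ≤ M0 ^ (3*m) := by
    intro t ht
    calc |s| ^ t ≤ M0 ^ t := pow_le_pow_left₀ (abs_nonneg _) hs t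
      _ ≤ M0 ^ (3*m) := pow_le_pow_right₀ hM0 ht
  -- the factor function
  set fac : (ℕ → ℝ) → Fin (m-2) → ℝ := fun c j =>
    β (j.1 + 1) / (Nat.factorial (j.1 + 3) : ℝ) * s ^ (j.1+1) +
    c (j.1 + 1) / (Nat.factorial (j.1 + 3) : ℝ) * s ^ (j.1+3) with hfacdef
  have hjle : ∀ j : Fin (m-2), j.1 + 3 ≤ 3*m := by
    intro j; have := j.2; omega
  have hfact1 : ∀ j : Fin (m-2), (1:ℝ) ≤ (Nat.factorial (j.1+3) : ℝ) := by
    intro j; exact_mod_cast Nat.one_le_iff_ne_zero.mpr (Nat.factorial_ne_zero _)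
  have hmem : ∀ j : Fin (m-2), 1 ≤ j.1 + 1 ∧ j.1 + 1 ≤ m - 2 := fun j => ⟨by omega, j.2⟩
  have hfacbound : ∀ (c : ℕ → ℝ), (∀ l, 1 ≤ l → l ≤ m - 2 → |c l| ≤ M0) →
      ∀ j : Fin (m-2), |fac c j| ≤ Mfac := by
    intro c hc j
    have h1 : |β (j.1+1) / (Nat.factorial (j.1+3) : ℝ) * s ^ (j.1+1)| ≤ M0 * M0^(3*m) := by
      rw [abs_mul, abs_div, abs_pow]
      refine mul_le_mul ?_ (hspow _ (by have := hjle j; omega)) (pow_nonneg (abs_nonneg _) _)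
        hM00
      calc |β (j.1+1)| / |(Nat.factorial (j.1+3) : ℝ)| ≤ |β (j.1+1)| / 1 := by
            refine div_le_div_of_nonneg_left (abs_nonneg _) one_pos ?_ |>.trans (le_refl _)
            rw [abs_of_nonneg (by positivity)]
            exact hfact1 j
        _ = |β (j.1+1)| := div_one _
        _ ≤ M0 := hβ _ (hmem j).1 (hmem j).2
    have h2 : |c (j.1+1) / (Nat.factorial (j.1+3) : ℝ) * s ^ (j.1+3)| ≤ M0 * M0^(3*m) := by
      rw [abs_mul, abs_div, abs_pow]
      refine mul_le_mul ?_ (hspow _ (hjle j)) (pow_nonneg (abs_nonneg _) _) hM00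
      calc |c (j.1+1)| / |(Nat.factorial (j.1+3) : ℝ)| ≤ |c (j.1+1)| / 1 := by
            refine div_le_div_of_nonneg_left (abs_nonneg _) one_pos ?_ |>.trans (le_refl _)
            rw [abs_of_nonneg (by positivity)]
            exact hfact1 j
        _ = |c (j.1+1)| := div_one _
        _ ≤ M0 := hc _ (hmem j).1 (hmem j).2
    calc |fac c j| ≤ M0 * M0^(3*m) + M0 * M0^(3*m) := le_trans (abs_add_le _ _) (add_le_add h1 h2)
      _ = 2 * (M0 * M0^(3*m)) := by ring
      _ = Mfac := by rw [hMfac, ← pow_succ']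
  have hfacd : ∀ j : Fin (m-2), |fac b j - fac b' j| ≤ M0 ^ (3*m) * ε := by
    intro j
    have : fac b j - fac b' j = (b (j.1+1) - b' (j.1+1)) / (Nat.factorial (j.1+3) : ℝ)
        * s ^ (j.1+3) := by rw [hfacdef]; ring
    rw [this, abs_mul, abs_div, abs_pow]
    rw [mul_comm (M0 ^ (3*m)) ε]
    refine mul_le_mul ?_ (hspow _ (hjle j)) (pow_nonneg (abs_nonneg _) _) hε
    calc |b (j.1+1) - b' (j.1+1)| / |(Nat.factorial (j.1+3) : ℝ)|
        ≤ |b (j.1+1) - b' (j.1+1)| / 1 := by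
          refine div_le_div_of_nonneg_left (abs_nonneg _) one_pos ?_ |>.trans (le_refl _)
          rw [abs_of_nonneg (by positivity)]
          exact hfact1 j
      _ = |b (j.1+1) - b' (j.1+1)| := div_one _
      _ ≤ ε := hd _ (hmem j).1 (hmem j).2
  -- evaluations as products
  have hev : ∀ c : ℕ → ℝ, (fPm m β c kb).eval s = ∏ j : Fin (m-2), (fac c j) ^ kb j := by
    intro c
    rw [fPm, Polynomial.eval_prod]
    refine Finset.prod_congr rfl fun j _ => ?_
    simp [hfacdef]
  rw [hev b, hev b']
  have hMfm : (1:ℝ) ≤ Mfac ^ m := one_le_pow₀ hMfac1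
  have key := abs_prod_sub_prod_le (Finset.univ : Finset (Fin (m-2)))
    (fun j => (fac b j) ^ kb j) (fun j => (fac b' j) ^ kb j) (Mfac ^ m)
    (fun _ => Mfac ^ m * ((m:ℝ) * (M0 ^ (3*m) * ε))) hMfm
    (fun j _ => by
      rw [abs_pow]
      calc |fac b j| ^ kb j ≤ Mfac ^ kb j :=
            pow_le_pow_left₀ (abs_nonneg _) (hfacbound b hb j) _
        _ ≤ Mfac ^ m := pow_le_pow_right₀ hMfac1 (kb_le hkb j))
    (fun j _ => by
      rw [abs_pow]
      calc |fac b' j| ^ kb j ≤ Mfac ^ kb j :=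
            pow_le_pow_left₀ (abs_nonneg _) (hfacbound b' hb' j) _
        _ ≤ Mfac ^ m := pow_le_pow_right₀ hMfac1 (kb_le hkb j))
    (fun j _ => by
      refine (abs_pow_sub_pow_le' (fac b j) (fac b' j) Mfac (M0 ^ (3*m) * ε) (kb j) hMfac1
        (hfacbound b hb j) (hfacbound b' hb' j) (hfacd j)).trans ?_
      have h1 : Mfac ^ kb j ≤ Mfac ^ m := pow_le_pow_right₀ hMfac1 (kb_le hkb j)
      have h2 : ((kb j : ℝ)) ≤ (m : ℝ) := by exact_mod_cast kb_le hkb j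
      have hnn : (0:ℝ) ≤ M0 ^ (3*m) * ε := by positivity
      have h3 : ((kb j : ℝ)) * (M0 ^ (3*m) * ε) ≤ (m:ℝ) * (M0 ^ (3*m) * ε) :=
        mul_le_mul_of_nonneg_right h2 hnn
      calc Mfac ^ kb j * (((kb j):ℝ) * (M0 ^ (3*m) * ε))
          ≤ Mfac ^ m * (((kb j):ℝ) * (M0 ^ (3*m) * ε)) := by
            refine mul_le_mul_of_nonneg_right h1 (by positivity)
        _ ≤ Mfac ^ m * ((m:ℝ) * (M0 ^ (3*m) * ε)) := mul_le_mul_of_nonneg_left h3 (by positivity))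
  refine key.trans ?_
  rw [Finset.sum_const, Finset.card_univ, Fintype.card_fin, nsmul_eq_mul]
  have hle : (Mfac ^ m) ^ (m - 2) * Mfac ^ m ≤ Mfac ^ (m * (m-1)) := by
    rw [← pow_mul, ← pow_add]
    refine pow_le_pow_right₀ hMfac1 ?_
    have h2 : m - 1 = (m - 2) + 1 := by omega
    rw [h2, Nat.mul_succ]
  calc (Mfac ^ m) ^ (m-2) * (((m - 2:ℕ):ℝ) * (Mfac ^ m * ((m:ℝ) * (M0 ^ (3*m) * ε))))
      = ((Mfac ^ m) ^ (m-2) * Mfac ^ m) * (((m - 2:ℕ):ℝ) * ((m:ℝ) * (M0 ^ (3*m) * ε))) := by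
        ring
    _ ≤ Mfac ^ (m*(m-1)) * (((m - 2:ℕ):ℝ) * ((m:ℝ) * (M0 ^ (3*m) * ε))) := by
        refine mul_le_mul_of_nonneg_right hle (by positivity)
    _ = CSTc m M0 * ε := by rw [CSTc, hMfac]; ring

lemma CSTc_nonneg (m : ℕ) (M0 : ℝ) (hM0 : 0 ≤ M0) : 0 ≤ CSTc m M0 := by
  rw [CSTc]
  have h1 : (0:ℝ) ≤ 2 * M0 ^ (3*m+1) := by
    have := pow_nonneg hM0 (3*m+1); linarith
  have h2 : (0:ℝ) ≤ (2 * M0 ^ (3*m+1)) ^ (m*(m-1)) := pow_nonneg h1 _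
  have h3 : (0:ℝ) ≤ M0 ^ (3*m) := pow_nonneg hM0 _
  positivity

lemma Dcom_coeff_diff_le (m : ℕ) (hm : 3 ≤ m) (M0 : ℝ) (hM0 : 1 ≤ M0)
    (hM0g : ((3*(m-2) : ℕ) : ℝ) ≤ M0) :
    ∃ c2 : ℝ, 0 ≤ c2 ∧ ∀ (β b b' : ℕ → ℝ) (ε : ℝ), 0 ≤ ε →
      (∀ l, 1 ≤ l → l ≤ m - 2 → |β l| ≤ M0) →
      (∀ l, 1 ≤ l → l ≤ m - 2 → |b l| ≤ M0) →
      (∀ l, 1 ≤ l → l ≤ m - 2 → |b' l| ≤ M0) →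
      (∀ l, 1 ≤ l → l ≤ m - 2 → |b l - b' l| ≤ ε) →
      ∀ w i, |(Dcom m β b w).coeff i - (Dcom m β b' w).coeff i| ≤ c2 * ε := by
  have hM00 : (0:ℝ) ≤ M0 := le_trans zero_le_one hM0
  have hCST := CSTc_nonneg m M0 hM00
  obtain ⟨L, hL0, hL⟩ := coeff_bound_of_eval (3*(m-2))
  refine ⟨L * CSTc m M0 * (∑ kb ∈ Fm m, pNN (cHm m kb)),
    mul_nonneg (mul_nonneg hL0 hCST) (Finset.sum_nonneg fun _ _ => pNN_nonneg _), ?_⟩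
  intro β b b' ε hε hβ hb hb' hd w i
  have key : ∀ kb ∈ Fm m,
      |(fPm m β b kb).coeff w - (fPm m β b' kb).coeff w| ≤ L * (CSTc m M0 * ε) := by
    intro kb hkb
    have hnd : (fPm m β b kb - fPm m β b' kb).natDegree ≤ 3*(m-2) := by
      refine le_trans (Polynomial.natDegree_sub_le _ _) ?_
      exact max_le (natDegree_fPm_le β b hkb) (natDegree_fPm_le β b' hkb)
    have heval : ∀ t ∈ Finset.range (3*(m-2)+1),
        |(fPm m β b kb - fPm m β b' kb).eval (t:ℝ)| ≤ CSTc m M0 * ε := by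
      intro t ht
      rw [Polynomial.eval_sub]
      refine fPm_eval_diff_le m hm β b b' hkb M0 ε hM0 hε hβ hb hb' hd (t:ℝ) ?_
      rw [Finset.mem_range] at ht
      rw [abs_of_nonneg (by positivity)]
      refine le_trans ?_ hM0g
      exact_mod_cast Nat.lt_succ_iff.mp ht
    have := hL _ hnd (CSTc m M0 * ε) heval w
    rwa [Polynomial.coeff_sub] at this
  have hrepr : (Dcom m β b w).coeff i - (Dcom m β b' w).coeff i
      = ∑ kb ∈ Fm m, ((fPm m β b kb).coeff w - (fPm m β b' kb).coeff w)
          * (cHm m kb).coeff i := by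
    rw [Dcom, Dcom, Polynomial.finset_sum_coeff, Polynomial.finset_sum_coeff,
      ← Finset.sum_sub_distrib]
    refine Finset.sum_congr rfl fun kb _ => ?_
    rw [Polynomial.coeff_smul, Polynomial.coeff_smul, smul_eq_mul, smul_eq_mul]
    ring
  rw [hrepr]
  calc |∑ kb ∈ Fm m, ((fPm m β b kb).coeff w - (fPm m β b' kb).coeff w) * (cHm m kb).coeff i|
      ≤ ∑ kb ∈ Fm m, |(fPm m β b kb).coeff w - (fPm m β b' kb).coeff w|
          * |(cHm m kb).coeff i| := by
        refine (Finset.abs_sum_le_sum_abs _ _).trans (le_of_eq ?_)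
        exact Finset.sum_congr rfl fun kb _ => abs_mul _ _
    _ ≤ ∑ kb ∈ Fm m, (L * (CSTc m M0 * ε)) * pNN (cHm m kb) := by
        refine Finset.sum_le_sum fun kb hkb => ?_
        exact mul_le_mul (key kb hkb) (abs_coeff_le_pNN _ _) (abs_nonneg _)
          (by positivity)
    _ = L * CSTc m M0 * (∑ kb ∈ Fm m, pNN (cHm m kb)) * ε := by
        rw [Finset.mul_sum, Finset.sum_mul]
        exact Finset.sum_congr rfl fun _ _ => by ring

end Helpers

open Polynomial Finset in
set_option maxHeartbeats 2000000 in
/-- Under the weak form of stationarity (Assumption (S)) the Edgeworth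
approximant `Φ_{m,n}` admits a stationary expansion
`Φ(x) − φ(x) Σ_{j=1}^{m−2} σ_n^{−j} 𝐇_j(x) + e^{−x²/2} R_n(x) σ_n^{−(m−1)}`
with polynomials `𝐇_j` independent of `n` whose coefficients are polynomial functions of
`α_j = q_{j+2} − q₂ p_{j+2}/p₂` and `β_j = p_{j+2}/p₂`. -/
theorem stmt9
    {Ω : Type*} [MeasurableSpace Ω] (μ : Measure Ω) [IsProbabilityMeasure μ]
    (S : ℕ → Ω → ℝ) (σ : ℕ → ℝ)
    (m : ℕ) (hm : 3 ≤ m)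
    (hSmeas : ∀ n, AEMeasurable (S n) μ)
    (hSmom : ∀ n, MemLp (S n) (m : ℕ) μ)
    (hmean : ∀ n, ∫ ω, S n ω ∂μ = 0)
    -- `γ n j` is the `j`-th cumulant of `S n`, characterized by the moment-cumulant recursion
    (γ : ℕ → ℕ → ℝ)
    (hcum : ∀ n, ∀ j : ℕ, 1 ≤ j → j ≤ m →
      ∫ ω, S n ω ^ j ∂μ = ∑ i ∈ Finset.Icc 1 j,
        (Nat.choose (j - 1) (i - 1) : ℝ) * γ n i * ∫ ω, S n ω ^ (j - i) ∂μ)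
    (hσdef : ∀ n, σ n ^ 2 = γ n 2) (hσnn : ∀ n, 0 ≤ σ n)
    (hσtop : Tendsto σ atTop atTop)
    -- Assumption (S)
    (p q : ℕ → ℝ) (hp2 : 0 < p 2)
    (δ : ℝ) (hδ : δ ∈ Set.Ioo (0 : ℝ) 1) (C : ℝ) (hC : 0 < C)
    (hStat : ∀ n : ℕ, 1 ≤ n → ∀ j : ℕ, 2 ≤ j → j ≤ m →
      |γ n j - (n * p j + q j)| ≤ C * δ ^ n) :
    ∃ H : ℕ → Polynomial ℝ,
      -- the coefficients of the `𝐇_j` are polynomial functions (with rational coefficients)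
      -- of the numbers `α_j = q_{j+2} − q₂ p_{j+2}/p₂` and `β_j = p_{j+2}/p₂`
      (∀ j : ℕ, 1 ≤ j → j ≤ m - 2 → ∀ i, (H j).coeff i ∈
        Subring.closure
          (Set.range ((↑) : ℚ → ℝ) ∪
            (fun l => q (l + 2) - q 2 * p (l + 2) / p 2) '' Set.Icc 1 (m - 2) ∪
            (fun l => p (l + 2) / p 2) '' Set.Icc 1 (m - 2))) ∧
      ∃ dm : ℕ, ∃ Km : ℝ,
        ∀ n : ℕ, 1 ≤ n →
          ∃ R : Polynomial ℝ, R.natDegree ≤ dm ∧ (∀ i, |R.coeff i| ≤ Km) ∧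
            ∀ x : ℝ,
              edgeworthFn m (fun j => γ n j / σ n ^ j) x =
                stdPhi x - stdphi x * (∑ j ∈ Finset.Icc 1 (m - 2), (H j).eval x / σ n ^ j) +
                  Real.exp (-x ^ 2 / 2) * R.eval x / σ n ^ (m - 1) := by
  classical
  obtain ⟨hδ0, hδ1⟩ := hδ
  have hδn1 : ∀ n : ℕ, 1 ≤ n → δ ^ n ≤ 1 := fun n _ => pow_le_one₀ (le_of_lt hδ0) (le_of_lt hδ1)
  have hδnpos : ∀ n : ℕ, (0:ℝ) < δ ^ n := fun n => pow_pos hδ0 n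
  -- the basic data
  set β : ℕ → ℝ := fun l => p (l + 2) / p 2 with hβdef
  set α : ℕ → ℝ := fun l => q (l + 2) - q 2 * p (l + 2) / p 2 with hαdef
  set bb : ℕ → ℕ → ℝ := fun n l => γ n (l + 2) - σ n ^ 2 * β l with hbbdef
  set W : ℕ := 3 * (m - 2) with hWdef
  -- the error estimate for bb
  set Cg : ℝ := C * (1 + ∑ l ∈ Finset.Icc 1 (m-2), |β l|) with hCgdef
  have hCg0 : 0 < Cg := by
    rw [hCgdef]
    have : (0:ℝ) ≤ ∑ l ∈ Finset.Icc 1 (m-2), |β l| :=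
      Finset.sum_nonneg fun _ _ => abs_nonneg _
    nlinarith
  have hgb : ∀ n : ℕ, 1 ≤ n → ∀ l, 1 ≤ l → l ≤ m - 2 → |bb n l - α l| ≤ Cg * δ ^ n := by
    intro n hn l hl1 hl2
    have hβp : β l * p 2 = p (l + 2) := by
      simp only [hβdef]
      field_simp
    have hq : q 2 * p (l+2) / p 2 = q 2 * β l := by
      simp only [hβdef]
      rw [mul_div_assoc]
    have hrw : bb n l - α l =
        (γ n (l + 2) - ((n:ℝ) * p (l+2) + q (l+2)))
          - β l * (γ n 2 - ((n:ℝ) * p 2 + q 2)) := by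
      simp only [hbbdef, hαdef]
      rw [hσdef n, hq]
      linear_combination (-(n:ℝ)) * hβp
    have h1 : |γ n (l + 2) - ((n:ℝ) * p (l+2) + q (l+2))| ≤ C * δ ^ n :=
      hStat n hn (l+2) (by omega) (by omega)
    have h2 : |γ n 2 - ((n:ℝ) * p 2 + q 2)| ≤ C * δ ^ n :=
      hStat n hn 2 (by omega) (by omega)
    have hβmem : |β l| ≤ ∑ l' ∈ Finset.Icc 1 (m-2), |β l'| :=
      Finset.single_le_sum (f := fun l' => |β l'|) (fun _ _ => abs_nonneg _)
        (Finset.mem_Icc.mpr ⟨hl1, hl2⟩)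
    calc |bb n l - α l|
        ≤ |γ n (l + 2) - ((n:ℝ) * p (l+2) + q (l+2))|
          + |β l| * |γ n 2 - ((n:ℝ) * p 2 + q 2)| := by
          rw [hrw]
          refine (abs_sub _ _).trans ?_
          rw [abs_mul]
      _ ≤ C * δ ^ n + (∑ l' ∈ Finset.Icc 1 (m-2), |β l'|) * (C * δ ^ n) := by
          refine add_le_add h1 ?_
          refine mul_le_mul hβmem h2 (abs_nonneg _) ?_
          exact Finset.sum_nonneg fun _ _ => abs_nonneg _
      _ = Cg * δ ^ n := by rw [hCgdef]; ring
  -- global parameter bound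
  set M0 : ℝ := ((3*(m-2) : ℕ) : ℝ) + 1 + (∑ l ∈ Finset.Icc 1 (m-2), (|α l| + |β l|)) + Cg
    with hM0def
  have hsumnn : (0:ℝ) ≤ ∑ l ∈ Finset.Icc 1 (m-2), (|α l| + |β l|) :=
    Finset.sum_nonneg fun _ _ => add_nonneg (abs_nonneg _) (abs_nonneg _)
  have hM01 : 1 ≤ M0 := by
    rw [hM0def]
    have : (0:ℝ) ≤ ((3*(m-2):ℕ):ℝ) := Nat.cast_nonneg _
    linarith
  have hM0g : ((3*(m-2) : ℕ) : ℝ) ≤ M0 := by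
    rw [hM0def]; linarith
  have hαβsum : ∀ l, 1 ≤ l → l ≤ m - 2 → |α l| + |β l| ≤
      ∑ l' ∈ Finset.Icc 1 (m-2), (|α l'| + |β l'|) := by
    intro l h1 h2
    exact Finset.single_le_sum (f := fun l' => |α l'| + |β l'|)
      (fun _ _ => add_nonneg (abs_nonneg _) (abs_nonneg _)) (Finset.mem_Icc.mpr ⟨h1, h2⟩)
  have hβM0 : ∀ l, 1 ≤ l → l ≤ m - 2 → |β l| ≤ M0 := by
    intro l h1 h2
    have := hαβsum l h1 h2
    have h3 : (0:ℝ) ≤ ((3*(m-2):ℕ):ℝ) := Nat.cast_nonneg _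
    rw [hM0def]
    have := abs_nonneg (α l)
    linarith [hCg0]
  have hαM0 : ∀ l, 1 ≤ l → l ≤ m - 2 → |α l| ≤ M0 := by
    intro l h1 h2
    have := hαβsum l h1 h2
    have h3 : (0:ℝ) ≤ ((3*(m-2):ℕ):ℝ) := Nat.cast_nonneg _
    rw [hM0def]
    have := abs_nonneg (β l)
    linarith [hCg0]
  have hbbM0 : ∀ n, 1 ≤ n → ∀ l, 1 ≤ l → l ≤ m - 2 → |bb n l| ≤ M0 := by
    intro n hn l h1 h2
    have hd := hgb n hn l h1 h2
    have hb1 : |bb n l| ≤ |α l| + Cg * δ ^ n := by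
      have heq : bb n l = α l + (bb n l - α l) := by ring
      calc |bb n l| = |α l + (bb n l - α l)| := by rw [← heq]
        _ ≤ |α l| + |bb n l - α l| := abs_add_le _ _
        _ ≤ |α l| + Cg * δ ^ n := by linarith
    have hCgδ : Cg * δ ^ n ≤ Cg := by
      nlinarith [hδn1 n hn, hδnpos n]
    have hα2 := hαβsum l h1 h2
    have h3 : (0:ℝ) ≤ ((3*(m-2):ℕ):ℝ) := Nat.cast_nonneg _
    have hβnn := abs_nonneg (β l)
    rw [hM0def]
    linarith
  -- coefficient difference constant
  obtain ⟨c2, hc20, hc2⟩ := Dcom_coeff_diff_le m hm M0 hM01 hM0g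
  have hdiffcoeff : ∀ n, 1 ≤ n → ∀ w i,
      |(Dcom m β α w).coeff i - (Dcom m β (bb n) w).coeff i| ≤ c2 * (Cg * δ ^ n) := by
    intro n hn w i
    refine hc2 β α (bb n) (Cg * δ ^ n)
      (mul_nonneg hCg0.le (le_of_lt (hδnpos n))) hβM0 hαM0 (hbbM0 n hn) ?_ w i
    intro l h1 h2
    rw [abs_sub_comm]
    exact hgb n hn l h1 h2
  -- plain bound for the stationary polynomials
  set BA : ℝ := ∑ w ∈ Finset.range (W+1), pNN (Dcom m β α w) with hBAdef
  have hBA0 : 0 ≤ BA := Finset.sum_nonneg fun _ _ => pNN_nonneg _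
  have hBA : ∀ w ∈ Finset.range (W+1), ∀ i, |(Dcom m β α w).coeff i| ≤ BA := by
    intro w hw i
    refine (abs_coeff_le_pNN _ _).trans ?_
    exact Finset.single_le_sum (f := fun w => pNN (Dcom m β α w))
      (fun _ _ => pNN_nonneg _) hw
  -- growth of σ and geometric decay
  set a : ℝ := |p 2| + |q 2| + C with hadef
  have ha0 : 0 < a := by rw [hadef]; have := abs_nonneg (p 2); have := abs_nonneg (q 2); linarith
  have hσ2le : ∀ n : ℕ, 1 ≤ n → σ n ^ 2 ≤ a * n := by
    intro n hn
    have h2 := hStat n hn 2 (le_refl 2) (by omega)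
    have habs := abs_le.mp h2
    have hδn := hδn1 n hn
    have hδp := hδnpos n
    have hCδ : C * δ ^ n ≤ C := by nlinarith
    have hn1 : (1:ℝ) ≤ (n:ℝ) := by exact_mod_cast hn
    have hp2' : (n:ℝ) * p 2 ≤ (n:ℝ) * |p 2| := by
      refine mul_le_mul_of_nonneg_left (le_abs_self _) (by linarith)
    have hq2' : q 2 ≤ |q 2| := le_abs_self _
    rw [hσdef n]
    calc γ n 2 ≤ (n:ℝ) * p 2 + q 2 + C * δ ^ n := by linarith [habs.2]
      _ ≤ (n:ℝ) * |p 2| + |q 2| + C := by linarith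
      _ ≤ (n:ℝ) * |p 2| + (n:ℝ) * (|q 2| + C) := by
          have : (0:ℝ) ≤ |q 2| + C := by positivity
          nlinarith
      _ = a * n := by rw [hadef]; ring
  have hgeo : Tendsto (fun n : ℕ => (n:ℝ) ^ (m-2) * (δ^2) ^ n) atTop (nhds 0) := by
    refine tendsto_pow_const_mul_const_pow_of_lt_one (m-2) (by positivity) ?_
    nlinarith
  obtain ⟨T0, hT0⟩ := hgeo.bddAbove_range
  have hT0' : ∀ n : ℕ, (n:ℝ) ^ (m-2) * (δ^2) ^ n ≤ T0 :=
    fun n => hT0 (Set.mem_range_self n)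
  have hT00 : 0 ≤ T0 := by
    have := hT0' 0
    have h0 : ((0:ℕ):ℝ) ^ (m-2) * (δ^2)^(0:ℕ) = 0 := by
      rw [Nat.cast_zero, zero_pow (by omega), zero_mul]
    rw [h0] at this
    exact this
  set Tσδ : ℝ := Real.sqrt (a ^ (m-2) * T0) with hTdef
  have hTσδ0 : 0 ≤ Tσδ := Real.sqrt_nonneg _
  have hTσδ : ∀ n, 1 ≤ n → σ n ^ (m-2) * δ ^ n ≤ Tσδ := by
    intro n hn
    have hx0 : 0 ≤ σ n ^ (m-2) * δ ^ n := mul_nonneg (pow_nonneg (hσnn n) _) (hδnpos n).le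
    rw [hTdef]
    rw [show σ n ^ (m-2) * δ ^ n
      = Real.sqrt ((σ n ^ (m-2) * δ ^ n)^2) from (Real.sqrt_sq hx0).symm]
    refine Real.sqrt_le_sqrt ?_
    have hexp : (σ n ^ (m-2) * δ ^ n)^2 = (σ n ^ 2) ^ (m-2) * ((δ^2) ^ n) := by ring
    rw [hexp]
    have h1 : (σ n ^ 2) ^ (m-2) ≤ (a * n) ^ (m-2) := by
      refine pow_le_pow_left₀ (sq_nonneg _) (hσ2le n hn) _
    calc (σ n ^ 2) ^ (m-2) * ((δ^2) ^ n) ≤ (a * n) ^ (m-2) * ((δ^2)^n) := by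
          refine mul_le_mul_of_nonneg_right h1 (by positivity)
      _ = a ^ (m-2) * ((n:ℝ) ^ (m-2) * (δ^2)^n) := by rw [mul_pow]; ring
      _ ≤ a ^ (m-2) * T0 := by
          refine mul_le_mul_of_nonneg_left (hT0' n) (by positivity)
  -- the polynomials
  refine ⟨fun j => Dcom m β α j, ?_, ?_⟩
  · -- coefficient membership
    intro j hj1 hj2 i
    set Sc := Subring.closure
          (Set.range ((↑) : ℚ → ℝ) ∪
            (fun l => q (l + 2) - q 2 * p (l + 2) / p 2) '' Set.Icc 1 (m - 2) ∪
            (fun l => p (l + 2) / p 2) '' Set.Icc 1 (m - 2)) with hScdef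
    have hrat : ∀ k : ℚ, ((k:ℝ)) ∈ Sc := by
      intro k
      exact Subring.subset_closure (Or.inl (Or.inl ⟨k, rfl⟩))
    have hβS : ∀ l, 1 ≤ l → l ≤ m - 2 → β l ∈ Sc := by
      intro l h1 h2
      exact Subring.subset_closure (Or.inr ⟨l, ⟨h1, h2⟩, rfl⟩)
    have hαS : ∀ l, 1 ≤ l → l ≤ m - 2 → α l ∈ Sc := by
      intro l h1 h2
      exact Subring.subset_closure (Or.inl (Or.inr ⟨l, ⟨h1, h2⟩, rfl⟩))
    exact Dcom_coeff_mem Sc hrat m β α hβS hαS j i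
  -- the remainder polynomials
  set c : ℝ := (Real.sqrt (2 * Real.pi))⁻¹ with hcdef
  set SH : ℕ → Polynomial ℝ := fun w =>
    if 1 ≤ w ∧ w ≤ m - 2 then Dcom m β α w else 0 with hSHdef
  set Rdef : ℕ → Polynomial ℝ := fun n =>
    if σ n = 0 then 0 else
      Polynomial.C c * ∑ w ∈ Finset.range (W+1),
        (σ n ^ (((m-1 : ℕ) : ℤ) - (w:ℤ))) • (SH w - Dcom m β (bb n) w) with hRdef
  refine ⟨3*m, ?_⟩
  -- degree bound
  have hdeg : ∀ n, (Rdef n).natDegree ≤ 3*m := by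
    intro n
    simp only [hRdef]
    split
    · simp
    · refine le_trans (Polynomial.natDegree_mul_le) ?_
      rw [Polynomial.natDegree_C, zero_add]
      refine Polynomial.natDegree_sum_le_of_forall_le _ _ fun w _ => ?_
      refine le_trans (Polynomial.natDegree_smul_le _ _) ?_
      refine le_trans (Polynomial.natDegree_sub_le _ _) ?_
      refine max_le ?_ (natDegree_Dcom_le _ _ _)
      simp only [hSHdef]
      split
      · exact natDegree_Dcom_le _ _ _
      · simp
  -- identity
  have hident : ∀ n, 1 ≤ n → ∀ x : ℝ,
      edgeworthFn m (fun j => γ n j / σ n ^ j) x =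
        stdPhi x - stdphi x *
          (∑ j ∈ Finset.Icc 1 (m - 2), (Dcom m β α j).eval x / σ n ^ j) +
        Real.exp (-x ^ 2 / 2) * (Rdef n).eval x / σ n ^ (m - 1) := by
    intro n hn x
    by_cases hσ0 : σ n = 0
    · -- degenerate case
      have hR0 : Rdef n = 0 := by simp only [hRdef]; simp [hσ0]
      have hcorr : edgeworthCorrection m (fun j => γ n j / σ n ^ j) x = 0 := by
        rw [edgeworthCorrection]
        refine Finset.sum_eq_zero fun kb hkb => ?_
        rw [Finset.mem_filter] at hkb
        obtain ⟨-, h1, -⟩ := hkb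
        obtain ⟨j0, hj0⟩ := Function.ne_iff.mp h1
        have : (∏ j : Fin (m - 2),
            ((γ n (j.1 + 3) / σ n ^ (j.1 + 3)) / (Nat.factorial (j.1 + 3) : ℝ)) ^ kb j) = 0 := by
          refine Finset.prod_eq_zero (Finset.mem_univ j0) ?_
          rw [hσ0, zero_pow (by omega), div_zero, zero_div]
          exact zero_pow (by simpa using hj0)
        rw [this, mul_zero, zero_mul]
      have hsum0 : (∑ j ∈ Finset.Icc 1 (m - 2), (Dcom m β α j).eval x / σ n ^ j) = 0 := by
        refine Finset.sum_eq_zero fun j hj => ?_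
        rw [Finset.mem_Icc] at hj
        rw [hσ0, zero_pow (by omega), div_zero]
      rw [edgeworthFn, hcorr, hsum0, hR0]
      simp
    · -- main case
      have hσpos : 0 < σ n := lt_of_le_of_ne (hσnn n) (Ne.symm hσ0)
      have hσpow : σ n ^ (m-1) ≠ 0 := pow_ne_zero _ hσ0
      -- Key A : the correction expansion
      have hbbfun : (fun l => γ n (l + 2) - σ n ^ 2 * β l) = bb n := rfl
      have keyA : edgeworthCorrection m (fun j => γ n j / σ n ^ j) x
          = ∑ w ∈ Finset.range (W+1), (Dcom m β (bb n) w).eval x * (σ n)⁻¹ ^ w := by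
        rw [corr_eq m (γ n) (σ n) hσ0 β x, hbbfun, hWdef]
        exact (Dcom_eval_sum β (bb n) (σ n)⁻¹ x).symm
      -- Key B : evaluation of Rdef
      have keyB : (Rdef n).eval x = c * ∑ w ∈ Finset.range (W+1),
          (σ n ^ (((m-1 : ℕ) : ℤ) - (w:ℤ))) * ((SH w).eval x - (Dcom m β (bb n) w).eval x) := by
        simp only [hRdef, if_neg hσ0]
        rw [Polynomial.eval_mul, Polynomial.eval_C, Polynomial.eval_finset_sum]
        congr 1
        refine Finset.sum_congr rfl fun w _ => ?_
        rw [Polynomial.eval_smul, smul_eq_mul, Polynomial.eval_sub]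
      -- Key C : the SH part
      have keyC : (∑ w ∈ Finset.range (W+1),
            (σ n ^ (((m-1 : ℕ) : ℤ) - (w:ℤ))) * (SH w).eval x)
          = σ n ^ (m-1) * ∑ j ∈ Finset.Icc 1 (m - 2), (Dcom m β α j).eval x / σ n ^ j := by
        have hfil : (Finset.range (W+1)).filter (fun w => 1 ≤ w ∧ w ≤ m - 2)
            = Finset.Icc 1 (m-2) := by
          refine Finset.ext fun w => ?_
          rw [Finset.mem_filter, Finset.mem_range, Finset.mem_Icc, hWdef]
          omega
        calc (∑ w ∈ Finset.range (W+1),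
              (σ n ^ (((m-1 : ℕ) : ℤ) - (w:ℤ))) * (SH w).eval x)
            = ∑ w ∈ Finset.range (W+1), (if 1 ≤ w ∧ w ≤ m - 2 then
                (σ n ^ (((m-1 : ℕ) : ℤ) - (w:ℤ))) * (Dcom m β α w).eval x else 0) := by
              refine Finset.sum_congr rfl fun w _ => ?_
              simp only [hSHdef]
              split
              · rfl
              · simp
          _ = ∑ w ∈ Finset.Icc 1 (m-2),
                (σ n ^ (((m-1 : ℕ) : ℤ) - (w:ℤ))) * (Dcom m β α w).eval x := by
              rw [← hfil, Finset.sum_filter]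
          _ = σ n ^ (m-1) * ∑ j ∈ Finset.Icc 1 (m - 2), (Dcom m β α j).eval x / σ n ^ j := by
              rw [Finset.mul_sum]
              refine Finset.sum_congr rfl fun w hw => ?_
              rw [Finset.mem_Icc] at hw
              have hz : (σ n ^ (((m-1 : ℕ) : ℤ) - (w:ℤ)))
                  = σ n ^ (m-1) / σ n ^ w := by
                rw [zpow_sub₀ hσ0, zpow_natCast, zpow_natCast]
              rw [hz]
              ring
      -- Key D : the correction part
      have keyD : (∑ w ∈ Finset.range (W+1),
            (σ n ^ (((m-1 : ℕ) : ℤ) - (w:ℤ))) * (Dcom m β (bb n) w).eval x)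
          = σ n ^ (m-1) * edgeworthCorrection m (fun j => γ n j / σ n ^ j) x := by
        rw [keyA, Finset.mul_sum]
        refine Finset.sum_congr rfl fun w hw => ?_
        have hz : (σ n ^ (((m-1 : ℕ) : ℤ) - (w:ℤ)))
            = σ n ^ (m-1) * ((σ n)⁻¹) ^ w := by
          rw [zpow_sub₀ hσ0, zpow_natCast, zpow_natCast, div_eq_mul_inv, inv_pow]
        rw [hz]
        ring
      have hReval : (Rdef n).eval x = c *
          (σ n ^ (m-1) * (∑ j ∈ Finset.Icc 1 (m - 2), (Dcom m β α j).eval x / σ n ^ j)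
            - σ n ^ (m-1) * edgeworthCorrection m (fun j => γ n j / σ n ^ j) x) := by
        rw [keyB, ← keyC, ← keyD]
        rw [← Finset.sum_sub_distrib]
        congr 1
        refine Finset.sum_congr rfl fun w _ => ?_
        ring
      rw [edgeworthFn, hReval, stdphi]
      have hcc : (Real.sqrt (2 * Real.pi))⁻¹ = c := by rw [hcdef]
      rw [hcc]
      set E := Real.exp (-x^2/2)
      set Sx := (∑ j ∈ Finset.Icc 1 (m - 2), (Dcom m β α j).eval x / σ n ^ j)
      set Cr := edgeworthCorrection m (fun j => γ n j / σ n ^ j) x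
      field_simp
      ring
  -- bounds for large n
  set TB : ℝ := c2 * Cg * Tσδ + (BA + c2 * Cg) with hTBdef
  have hTB0 : 0 ≤ TB := by
    rw [hTBdef]
    have : 0 ≤ c2 * Cg := mul_nonneg hc20 (le_of_lt hCg0)
    nlinarith
  have hKinf : ∀ n, 1 ≤ n → 1 ≤ σ n → ∀ i,
      |(Rdef n).coeff i| ≤ |c| * ((W+1 : ℕ) * TB) := by
    intro n hn hσ1 i
    have hσ0 : σ n ≠ 0 := by intro h; rw [h] at hσ1; linarith
    have hσpos : (0:ℝ) < σ n := by linarith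
    have hco : (Rdef n).coeff i = c * ∑ w ∈ Finset.range (W+1),
        (σ n ^ (((m-1 : ℕ) : ℤ) - (w:ℤ)))
          * ((SH w).coeff i - (Dcom m β (bb n) w).coeff i) := by
      simp only [hRdef, if_neg hσ0]
      rw [Polynomial.coeff_C_mul, Polynomial.finset_sum_coeff]
      congr 1
    rw [hco, abs_mul]
    refine mul_le_mul_of_nonneg_left ?_ (abs_nonneg c)
    refine le_trans (Finset.abs_sum_le_sum_abs _ _) ?_
    have hterm : ∀ w ∈ Finset.range (W+1),
        |(σ n ^ (((m-1 : ℕ) : ℤ) - (w:ℤ)))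
          * ((SH w).coeff i - (Dcom m β (bb n) w).coeff i)| ≤ TB := by
      intro w hw
      rcases Nat.eq_zero_or_pos w with rfl | hw1
      · -- w = 0
        have hSH0 : SH 0 = 0 := by simp [hSHdef]
        have hD0 : Dcom m β (bb n) 0 = 0 := Dcom_zero β (bb n)
        rw [hSH0, hD0]
        simp [hTB0]
      rcases le_or_gt w (m-2) with hw2 | hw2
      · -- middle range
        have hSHw : SH w = Dcom m β α w := by
          simp only [hSHdef]
          rw [if_pos ⟨hw1, hw2⟩]
        have hzc : (((m-1 : ℕ) : ℤ) - (w:ℤ)) = ((m-1-w : ℕ) : ℤ) := by omega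
        have habs1 : |σ n ^ (((m-1 : ℕ) : ℤ) - (w:ℤ))| = σ n ^ (m-1-w) := by
          rw [hzc, zpow_natCast, abs_pow, abs_of_pos hσpos]
        rw [abs_mul, habs1, hSHw]
        have h1 : σ n ^ (m-1-w) ≤ σ n ^ (m-2) :=
          pow_le_pow_right₀ hσ1 (by omega)
        have h2 := hdiffcoeff n hn w i
        calc σ n ^ (m-1-w) * |(Dcom m β α w).coeff i - (Dcom m β (bb n) w).coeff i|
            ≤ σ n ^ (m-2) * (c2 * (Cg * δ ^ n)) := by
              refine mul_le_mul h1 h2 (abs_nonneg _) (by positivity)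
          _ = c2 * Cg * (σ n ^ (m-2) * δ ^ n) := by ring
          _ ≤ c2 * Cg * Tσδ := by
              refine mul_le_mul_of_nonneg_left (hTσδ n hn) ?_
              exact mul_nonneg hc20 (le_of_lt hCg0)
          _ ≤ TB := by rw [hTBdef]; nlinarith [hBA0, hc20, hCg0.le]
      · -- tail range
        have hSHw : SH w = 0 := by
          simp only [hSHdef]
          rw [if_neg (by omega)]
        have habs1 : |σ n ^ (((m-1 : ℕ) : ℤ) - (w:ℤ))| ≤ 1 := by
          rw [abs_of_pos (zpow_pos hσpos _)]
          refine zpow_le_one_of_nonpos₀ hσ1 (by omega)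
        rw [abs_mul, hSHw]
        have h2 : |(0:ℝ) - (Dcom m β (bb n) w).coeff i| ≤ BA + c2 * Cg := by
          rw [zero_sub, abs_neg]
          have hδn := hδn1 n hn
          have h3 := hdiffcoeff n hn w i
          have h4 := hBA w hw i
          have h5 : c2 * (Cg * δ ^ n) ≤ c2 * Cg := by
            nlinarith [mul_le_mul_of_nonneg_left hδn (mul_nonneg hc20 hCg0.le)]
          calc |(Dcom m β (bb n) w).coeff i|
              ≤ |(Dcom m β α w).coeff i|
                + |(Dcom m β α w).coeff i - (Dcom m β (bb n) w).coeff i| := by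
                have h8 : (Dcom m β (bb n) w).coeff i = (Dcom m β α w).coeff i
                    - ((Dcom m β α w).coeff i - (Dcom m β (bb n) w).coeff i) := by ring
                conv_lhs => rw [h8]
                exact abs_sub ((Dcom m β α w).coeff i)
                  ((Dcom m β α w).coeff i - (Dcom m β (bb n) w).coeff i)
            _ ≤ BA + c2 * Cg := by linarith
        calc |σ n ^ (((m-1 : ℕ) : ℤ) - (w:ℤ))| * |0 - (Dcom m β (bb n) w).coeff i|
            ≤ 1 * (BA + c2 * Cg) := by
              refine mul_le_mul habs1 h2 (abs_nonneg _) zero_le_one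
          _ = BA + c2 * Cg := one_mul _
          _ ≤ TB := by
              rw [hTBdef]
              linarith [mul_nonneg (mul_nonneg hc20 hCg0.le) hTσδ0]
    calc (∑ w ∈ Finset.range (W+1),
          |(σ n ^ (((m-1 : ℕ) : ℤ) - (w:ℤ)))
            * ((SH w).coeff i - (Dcom m β (bb n) w).coeff i)|)
        ≤ ∑ w ∈ Finset.range (W+1), TB := Finset.sum_le_sum hterm
      _ = ((W+1 : ℕ) : ℝ) * TB := by rw [Finset.sum_const, Finset.card_range, nsmul_eq_mul]
  -- exceptional small-n set
  obtain ⟨N, hN⟩ := Filter.eventually_atTop.mp (hσtop.eventually_ge_atTop 1)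
  obtain ⟨K', hK'0, hK'⟩ := exists_bound_coeff_lt Rdef N
  refine ⟨max (|c| * ((W+1 : ℕ) * TB)) K', fun n hn => ?_⟩
  refine ⟨Rdef n, hdeg n, ?_, hident n hn⟩
  intro i
  rcases lt_or_ge n N with hnN | hnN
  · exact le_trans (hK' n hnN i) (le_max_right _ _)
  · exact le_trans (hKinf n hn (hN n hnN) i) (le_max_left _ _)
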